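/- arXiv:1601.04268 — 2 statements merged into one kernel-verified Lean document; each statement's English description precedes it below -/
import Mathlib

section
/- Let M = [[A,B],[C,D]] ∈ Ω̂₂ with QM = εMQ, ε ∈ {1,−1}, so that A = [[a₁,a₂],[εa₂,εa₁]], B = [[b₁,b₂],[εb₂,εb₁]], C = [[c₁,c₂],[εc₂,εc₁]], D = [[d₁,d₂],[εd₂,εd₁]]. Put M₁ = [[a₁+a₂, b₁+b₂],[c₁+c₂, d₁+d₂]] and M₂ = [[a₁−a₂, b₁−b₂],[c₁−c₂, d₁−d₂]]. Then M₁, M₂ ∈ SL₂(ℝ), and for every Z = [[z₁,z₂],[z₂,z₁]] ∈ Ĥ₂ one has M<Z> = [[ (M₁<z₁+z₂> + M₂<z₁−z₂>)/2, ε(M₁<z₁+z₂> − M₂<z₁−z₂>)/2 ],[ ε(M₁<z₁+z₂> − M₂<z₁−z₂>)/2, (M₁<z₁+z₂> + M₂<z₁−z₂>)/2 ]], where for N = [[a,b],[c,d]] ∈ SL₂(ℝ) and w in the upper half plane, N<w> = (aw+b)/(cw+d). -/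
open Matrix Complex

noncomputable section

abbrev Mat2 : Type := Matrix (Fin 2) (Fin 2) ℂ
abbrev Mat2R : Type := Matrix (Fin 2) (Fin 2) ℝ
abbrev Mat4 : Type := Matrix (Fin 2 ⊕ Fin 2) (Fin 2 ⊕ Fin 2) ℝ

/-- `q = [[0,1],[1,0]]`. -/
def qR : Mat2R := !![0, 1; 1, 0]

/-- `J = [[0, I₂],[−I₂, 0]]` (4×4). -/
def Jmat : Mat4 := Matrix.fromBlocks 0 1 (-1) 0

/-- `Q = diag(q, q)` (4×4). -/
def Qmat : Mat4 := Matrix.fromBlocks qR 0 0 qR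

/-- `Ω₂ = Sp(4,ℝ) = {M : ᵗM J M = J}`. -/
def Omega2 : Set Mat4 := {M | Mᵀ * Jmat * M = Jmat}

/-- The new Siegel upper half space `Ĥ₂`: bi-symmetric `Z = [[τ,z],[z,τ]]` with `Im τ > |Im z|`. -/
def Hhat : Set Mat2 :=
  {Z | Z 1 1 = Z 0 0 ∧ Z 1 0 = Z 0 1 ∧ |(Z 0 1).im| < (Z 0 0).im}

/-- The action `M<Z> = (AZ+B)(CZ+D)⁻¹` of a real 4×4 matrix in 2×2 blocks on `Z ∈ ℂ^{2×2}`. -/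
def act (M : Mat4) (Z : Mat2) : Mat2 :=
  (M.toBlocks₁₁.map Complex.ofReal * Z + M.toBlocks₁₂.map Complex.ofReal) *
    (M.toBlocks₂₁.map Complex.ofReal * Z + M.toBlocks₂₂.map Complex.ofReal)⁻¹

/-- `Ω̂₂ = {M ∈ Ω₂ : M<Z> ∈ Ĥ₂ for all Z ∈ Ĥ₂}`. -/
def OmegaHat : Set Mat4 := {M | M ∈ Omega2 ∧ ∀ Z ∈ Hhat, act M Z ∈ Hhat}

/-- Linear fractional action of a real 2×2 matrix on a complex number. -/
def mob (N : Mat2R) (w : ℂ) : ℂ :=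
  ((N 0 0 : ℂ) * w + (N 0 1 : ℂ)) / ((N 1 0 : ℂ) * w + (N 1 1 : ℂ))


lemma denom_ne_zero' (c d : ℝ) (h : ¬ (c = 0 ∧ d = 0)) (w : ℂ) (hw : 0 < w.im) :
    (c : ℂ) * w + d ≠ 0 := by
  intro hcd
  rcases eq_or_ne c 0 with hc | hc
  · refine h ⟨hc, ?_⟩
    rw [hc] at hcd
    simpa using hcd
  · have him : ((c : ℂ) * w + (d : ℂ)).im = c * w.im := by
      simp [Complex.add_im, Complex.mul_im]
    rw [hcd] at him
    have : c * w.im = 0 := by simpa using him.symm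
    rcases mul_eq_zero.mp this with h1 | h1
    · exact hc h1
    · linarith

/-- for `M ∈ Ω̂₂` with `QM = εMQ`, the blocks of `M` are of the
form `[[a,b],[εb,εa]]`, the matrices `M₁, M₂` are in `SL₂(ℝ)`, and the action of
`M` on `Ĥ₂` reduces to the two linear fractional actions of `M₁` and `M₂`. -/
theorem stmt_14 (M : Mat4) (hM : M ∈ OmegaHat) (ε : ℝ) (hε : ε = 1 ∨ ε = -1)
    (hQ : Qmat * M = ε • (M * Qmat)) :
    (M.toBlocks₁₁ 1 0 = ε * M.toBlocks₁₁ 0 1 ∧ M.toBlocks₁₁ 1 1 = ε * M.toBlocks₁₁ 0 0) ∧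
    (M.toBlocks₁₂ 1 0 = ε * M.toBlocks₁₂ 0 1 ∧ M.toBlocks₁₂ 1 1 = ε * M.toBlocks₁₂ 0 0) ∧
    (M.toBlocks₂₁ 1 0 = ε * M.toBlocks₂₁ 0 1 ∧ M.toBlocks₂₁ 1 1 = ε * M.toBlocks₂₁ 0 0) ∧
    (M.toBlocks₂₂ 1 0 = ε * M.toBlocks₂₂ 0 1 ∧ M.toBlocks₂₂ 1 1 = ε * M.toBlocks₂₂ 0 0) ∧
    (!![M.toBlocks₁₁ 0 0 + M.toBlocks₁₁ 0 1, M.toBlocks₁₂ 0 0 + M.toBlocks₁₂ 0 1;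
        M.toBlocks₂₁ 0 0 + M.toBlocks₂₁ 0 1, M.toBlocks₂₂ 0 0 + M.toBlocks₂₂ 0 1] : Mat2R).det = 1 ∧
    (!![M.toBlocks₁₁ 0 0 - M.toBlocks₁₁ 0 1, M.toBlocks₁₂ 0 0 - M.toBlocks₁₂ 0 1;
        M.toBlocks₂₁ 0 0 - M.toBlocks₂₁ 0 1, M.toBlocks₂₂ 0 0 - M.toBlocks₂₂ 0 1] : Mat2R).det = 1 ∧
    ∀ Z ∈ Hhat,
      act M Z =
        !![(mob !![M.toBlocks₁₁ 0 0 + M.toBlocks₁₁ 0 1, M.toBlocks₁₂ 0 0 + M.toBlocks₁₂ 0 1;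
              M.toBlocks₂₁ 0 0 + M.toBlocks₂₁ 0 1, M.toBlocks₂₂ 0 0 + M.toBlocks₂₂ 0 1]
              (Z 0 0 + Z 0 1) +
            mob !![M.toBlocks₁₁ 0 0 - M.toBlocks₁₁ 0 1, M.toBlocks₁₂ 0 0 - M.toBlocks₁₂ 0 1;
              M.toBlocks₂₁ 0 0 - M.toBlocks₂₁ 0 1, M.toBlocks₂₂ 0 0 - M.toBlocks₂₂ 0 1]
              (Z 0 0 - Z 0 1)) / 2,
          (ε : ℂ) * (mob !![M.toBlocks₁₁ 0 0 + M.toBlocks₁₁ 0 1, M.toBlocks₁₂ 0 0 + M.toBlocks₁₂ 0 1;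
              M.toBlocks₂₁ 0 0 + M.toBlocks₂₁ 0 1, M.toBlocks₂₂ 0 0 + M.toBlocks₂₂ 0 1]
              (Z 0 0 + Z 0 1) -
            mob !![M.toBlocks₁₁ 0 0 - M.toBlocks₁₁ 0 1, M.toBlocks₁₂ 0 0 - M.toBlocks₁₂ 0 1;
              M.toBlocks₂₁ 0 0 - M.toBlocks₂₁ 0 1, M.toBlocks₂₂ 0 0 - M.toBlocks₂₂ 0 1]
              (Z 0 0 - Z 0 1)) / 2;
          (ε : ℂ) * (mob !![M.toBlocks₁₁ 0 0 + M.toBlocks₁₁ 0 1, M.toBlocks₁₂ 0 0 + M.toBlocks₁₂ 0 1;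
              M.toBlocks₂₁ 0 0 + M.toBlocks₂₁ 0 1, M.toBlocks₂₂ 0 0 + M.toBlocks₂₂ 0 1]
              (Z 0 0 + Z 0 1) -
            mob !![M.toBlocks₁₁ 0 0 - M.toBlocks₁₁ 0 1, M.toBlocks₁₂ 0 0 - M.toBlocks₁₂ 0 1;
              M.toBlocks₂₁ 0 0 - M.toBlocks₂₁ 0 1, M.toBlocks₂₂ 0 0 - M.toBlocks₂₂ 0 1]
              (Z 0 0 - Z 0 1)) / 2,
          (mob !![M.toBlocks₁₁ 0 0 + M.toBlocks₁₁ 0 1, M.toBlocks₁₂ 0 0 + M.toBlocks₁₂ 0 1;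
              M.toBlocks₂₁ 0 0 + M.toBlocks₂₁ 0 1, M.toBlocks₂₂ 0 0 + M.toBlocks₂₂ 0 1]
              (Z 0 0 + Z 0 1) +
            mob !![M.toBlocks₁₁ 0 0 - M.toBlocks₁₁ 0 1, M.toBlocks₁₂ 0 0 - M.toBlocks₁₂ 0 1;
              M.toBlocks₂₁ 0 0 - M.toBlocks₂₁ 0 1, M.toBlocks₂₂ 0 0 - M.toBlocks₂₂ 0 1]
              (Z 0 0 - Z 0 1)) / 2] := by
  obtain ⟨hSp, -⟩ := hM
  have hq : ∀ i j : Fin 2 ⊕ Fin 2, (Qmat * M) i j = (ε • (M * Qmat)) i j :=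
    fun i j => congrFun (congrFun hQ i) j
  have e11a : M (Sum.inl 1) (Sum.inl 0) = ε * M (Sum.inl 0) (Sum.inl 1) := by
    simpa [Qmat, qR, Matrix.mul_apply, Fintype.sum_sum_type, Fin.sum_univ_two] using
      hq (Sum.inl 0) (Sum.inl 0)
  have e11b : M (Sum.inl 1) (Sum.inl 1) = ε * M (Sum.inl 0) (Sum.inl 0) := by
    simpa [Qmat, qR, Matrix.mul_apply, Fintype.sum_sum_type, Fin.sum_univ_two] using
      hq (Sum.inl 0) (Sum.inl 1)
  have e12a : M (Sum.inl 1) (Sum.inr 0) = ε * M (Sum.inl 0) (Sum.inr 1) := by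
    simpa [Qmat, qR, Matrix.mul_apply, Fintype.sum_sum_type, Fin.sum_univ_two] using
      hq (Sum.inl 0) (Sum.inr 0)
  have e12b : M (Sum.inl 1) (Sum.inr 1) = ε * M (Sum.inl 0) (Sum.inr 0) := by
    simpa [Qmat, qR, Matrix.mul_apply, Fintype.sum_sum_type, Fin.sum_univ_two] using
      hq (Sum.inl 0) (Sum.inr 1)
  have e21a : M (Sum.inr 1) (Sum.inl 0) = ε * M (Sum.inr 0) (Sum.inl 1) := by
    simpa [Qmat, qR, Matrix.mul_apply, Fintype.sum_sum_type, Fin.sum_univ_two] using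
      hq (Sum.inr 0) (Sum.inl 0)
  have e21b : M (Sum.inr 1) (Sum.inl 1) = ε * M (Sum.inr 0) (Sum.inl 0) := by
    simpa [Qmat, qR, Matrix.mul_apply, Fintype.sum_sum_type, Fin.sum_univ_two] using
      hq (Sum.inr 0) (Sum.inl 1)
  have e22a : M (Sum.inr 1) (Sum.inr 0) = ε * M (Sum.inr 0) (Sum.inr 1) := by
    simpa [Qmat, qR, Matrix.mul_apply, Fintype.sum_sum_type, Fin.sum_univ_two] using
      hq (Sum.inr 0) (Sum.inr 0)
  have e22b : M (Sum.inr 1) (Sum.inr 1) = ε * M (Sum.inr 0) (Sum.inr 0) := by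
    simpa [Qmat, qR, Matrix.mul_apply, Fintype.sum_sum_type, Fin.sum_univ_two] using
      hq (Sum.inr 0) (Sum.inr 1)
  have s1 := congrFun (congrFun hSp (Sum.inl 0)) (Sum.inr 0)
  have s2 := congrFun (congrFun hSp (Sum.inl 0)) (Sum.inr 1)
  simp only [Jmat, Matrix.mul_apply, Fintype.sum_sum_type, Fin.sum_univ_two,
    Matrix.transpose_apply, Matrix.fromBlocks_apply₁₁, Matrix.fromBlocks_apply₁₂,
    Matrix.fromBlocks_apply₂₁, Matrix.fromBlocks_apply₂₂, Matrix.zero_apply,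
    Matrix.one_apply, Matrix.neg_apply, zero_mul, mul_zero,
    add_zero, zero_add, neg_zero, mul_one, one_mul, mul_neg, neg_mul,
    Fin.zero_eta, Fin.mk_one, Fin.reduceEq, reduceIte, if_true, if_false] at s1 s2
  simp only [e11a, e12a, e12b, e21a, e22a, e22b] at s1 s2
  have hdet1 :
      (!![M.toBlocks₁₁ 0 0 + M.toBlocks₁₁ 0 1, M.toBlocks₁₂ 0 0 + M.toBlocks₁₂ 0 1;
          M.toBlocks₂₁ 0 0 + M.toBlocks₂₁ 0 1, M.toBlocks₂₂ 0 0 + M.toBlocks₂₂ 0 1] : Mat2R).det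
        = 1 := by
    simp only [Matrix.det_fin_two_of, Matrix.toBlocks₁₁, Matrix.toBlocks₁₂,
      Matrix.toBlocks₂₁, Matrix.toBlocks₂₂, Matrix.of_apply]
    rcases hε with h | h <;> subst h <;> linear_combination s1 + s2
  have hdet2 :
      (!![M.toBlocks₁₁ 0 0 - M.toBlocks₁₁ 0 1, M.toBlocks₁₂ 0 0 - M.toBlocks₁₂ 0 1;
          M.toBlocks₂₁ 0 0 - M.toBlocks₂₁ 0 1, M.toBlocks₂₂ 0 0 - M.toBlocks₂₂ 0 1] : Mat2R).det
        = 1 := by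
    simp only [Matrix.det_fin_two_of, Matrix.toBlocks₁₁, Matrix.toBlocks₁₂,
      Matrix.toBlocks₂₁, Matrix.toBlocks₂₂, Matrix.of_apply]
    rcases hε with h | h <;> subst h <;> linear_combination s1 - s2
  refine ⟨⟨e11a, e11b⟩, ⟨e12a, e12b⟩, ⟨e21a, e21b⟩, ⟨e22a, e22b⟩, hdet1, hdet2, ?_⟩
  intro Z hZ
  obtain ⟨hZ11, hZ10, hZim⟩ := hZ
  obtain ⟨him1, him2⟩ := abs_lt.mp hZim
  have hεne : (ε : ℂ) ≠ 0 := by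
    rcases hε with h | h <;> subst h <;> norm_num
  set p : ℂ := (M (Sum.inr 0) (Sum.inl 0) : ℂ) * Z 0 0 + (M (Sum.inr 0) (Sum.inl 1) : ℂ) * Z 0 1
      + (M (Sum.inr 0) (Sum.inr 0) : ℂ) with hp
  set q : ℂ := (M (Sum.inr 0) (Sum.inl 0) : ℂ) * Z 0 1 + (M (Sum.inr 0) (Sum.inl 1) : ℂ) * Z 0 0
      + (M (Sum.inr 0) (Sum.inr 1) : ℂ) with hq'
  set r : ℂ := (M (Sum.inl 0) (Sum.inl 0) : ℂ) * Z 0 0 + (M (Sum.inl 0) (Sum.inl 1) : ℂ) * Z 0 1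
      + (M (Sum.inl 0) (Sum.inr 0) : ℂ) with hr
  set s : ℂ := (M (Sum.inl 0) (Sum.inl 0) : ℂ) * Z 0 1 + (M (Sum.inl 0) (Sum.inl 1) : ℂ) * Z 0 0
      + (M (Sum.inl 0) (Sum.inr 1) : ℂ) with hs
  have hw1 : (0:ℝ) < (Z 0 0 + Z 0 1).im := by
    simp only [Complex.add_im]; linarith
  have hw2 : (0:ℝ) < (Z 0 0 - Z 0 1).im := by
    simp only [Complex.sub_im]; linarith
  have hnz1 : ¬ (M (Sum.inr 0) (Sum.inl 0) + M (Sum.inr 0) (Sum.inl 1) = 0 ∧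
      M (Sum.inr 0) (Sum.inr 0) + M (Sum.inr 0) (Sum.inr 1) = 0) := by
    rintro ⟨h1, h2⟩
    rw [Matrix.det_fin_two_of] at hdet1
    simp only [Matrix.toBlocks₂₁, Matrix.toBlocks₂₂, Matrix.of_apply, h1, h2,
      mul_zero, zero_mul, sub_zero] at hdet1
    norm_num at hdet1
  have hnz2 : ¬ (M (Sum.inr 0) (Sum.inl 0) - M (Sum.inr 0) (Sum.inl 1) = 0 ∧
      M (Sum.inr 0) (Sum.inr 0) - M (Sum.inr 0) (Sum.inr 1) = 0) := by
    rintro ⟨h1, h2⟩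
    rw [Matrix.det_fin_two_of] at hdet2
    simp only [Matrix.toBlocks₂₁, Matrix.toBlocks₂₂, Matrix.of_apply, h1, h2,
      mul_zero, zero_mul, sub_zero] at hdet2
    norm_num at hdet2
  have hD1 : ((M (Sum.inr 0) (Sum.inl 0) + M (Sum.inr 0) (Sum.inl 1) : ℝ) : ℂ) * (Z 0 0 + Z 0 1)
      + ((M (Sum.inr 0) (Sum.inr 0) + M (Sum.inr 0) (Sum.inr 1) : ℝ) : ℂ) ≠ 0 :=
    denom_ne_zero' _ _ hnz1 _ hw1
  have hD2 : ((M (Sum.inr 0) (Sum.inl 0) - M (Sum.inr 0) (Sum.inl 1) : ℝ) : ℂ) * (Z 0 0 - Z 0 1)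
      + ((M (Sum.inr 0) (Sum.inr 0) - M (Sum.inr 0) (Sum.inr 1) : ℝ) : ℂ) ≠ 0 :=
    denom_ne_zero' _ _ hnz2 _ hw2
  have hppq : p + q ≠ 0 := by
    rw [hp, hq']
    intro hcon
    apply hD1
    rw [← hcon]; push_cast; ring
  have hpmq : p - q ≠ 0 := by
    rw [hp, hq']
    intro hcon
    apply hD2
    rw [← hcon]; push_cast; ring
  push_cast at hD1 hD2
  have hAB : M.toBlocks₁₁.map Complex.ofReal * Z + M.toBlocks₁₂.map Complex.ofReal
      = !![r, s; (ε : ℂ) * s, (ε : ℂ) * r] := by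
    ext i j
    fin_cases i <;> fin_cases j <;>
      simp only [Matrix.add_apply, Matrix.mul_apply, Fin.sum_univ_two, Matrix.map_apply,
        Matrix.toBlocks₁₁, Matrix.toBlocks₁₂, Matrix.of_apply, Fin.zero_eta, Fin.mk_one,
        Matrix.cons_val', Matrix.cons_val_zero, Matrix.cons_val_one, Matrix.head_cons,
        Matrix.head_fin_const, Matrix.empty_val', Matrix.cons_val_fin_one,
        hZ10, hZ11, e11a, e11b, e12a, e12b, hr, hs] <;>
      push_cast <;> ring
  have hCD : M.toBlocks₂₁.map Complex.ofReal * Z + M.toBlocks₂₂.map Complex.ofReal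
      = !![p, q; (ε : ℂ) * q, (ε : ℂ) * p] := by
    ext i j
    fin_cases i <;> fin_cases j <;>
      simp only [Matrix.add_apply, Matrix.mul_apply, Fin.sum_univ_two, Matrix.map_apply,
        Matrix.toBlocks₂₁, Matrix.toBlocks₂₂, Matrix.of_apply, Fin.zero_eta, Fin.mk_one,
        Matrix.cons_val', Matrix.cons_val_zero, Matrix.cons_val_one, Matrix.head_cons,
        Matrix.head_fin_const, Matrix.empty_val', Matrix.cons_val_fin_one,
        hZ10, hZ11, e21a, e21b, e22a, e22b, hp, hq'] <;>
      push_cast <;> ring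
  have hdetCD : IsUnit ((!![p, q; (ε : ℂ) * q, (ε : ℂ) * p] : Mat2).det) := by
    rw [Matrix.det_fin_two_of]
    refine isUnit_iff_ne_zero.mpr ?_
    have hfac : p * ((ε : ℂ) * p) - q * ((ε : ℂ) * q) = (ε : ℂ) * ((p + q) * (p - q)) := by ring
    rw [hfac]
    exact mul_ne_zero hεne (mul_ne_zero hppq hpmq)
  unfold act
  rw [hAB, hCD]
  haveI := (!![p, q; (ε : ℂ) * q, (ε : ℂ) * p] : Mat2).invertibleOfIsUnitDet hdetCD
  rw [Matrix.mul_inv_eq_iff_eq_mul_of_invertible]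
  ext i j
  fin_cases i <;> fin_cases j <;>
    simp only [mob, Matrix.mul_apply, Fin.sum_univ_two, Matrix.toBlocks₁₁, Matrix.toBlocks₁₂,
      Matrix.toBlocks₂₁, Matrix.toBlocks₂₂, Matrix.of_apply, Fin.zero_eta, Fin.mk_one,
      Matrix.cons_val', Matrix.cons_val_zero, Matrix.cons_val_one, Matrix.head_cons,
      Matrix.head_fin_const, Matrix.empty_val', Matrix.cons_val_fin_one,
      hp, hq', hr, hs] <;>
    push_cast <;>
    set D1 : ℂ := ((M (Sum.inr 0) (Sum.inl 0) : ℂ) + (M (Sum.inr 0) (Sum.inl 1) : ℂ)) * (Z 0 0 + Z 0 1) +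
      ((M (Sum.inr 0) (Sum.inr 0) : ℂ) + (M (Sum.inr 0) (Sum.inr 1) : ℂ)) with hD1d <;>
    set D2 : ℂ := ((M (Sum.inr 0) (Sum.inl 0) : ℂ) - (M (Sum.inr 0) (Sum.inl 1) : ℂ)) * (Z 0 0 - Z 0 1) +
      ((M (Sum.inr 0) (Sum.inr 0) : ℂ) - (M (Sum.inr 0) (Sum.inr 1) : ℂ)) with hD2d <;>
    field_simp <;>
    rw [hD1d, hD2d] <;>
    rcases hε with h | h <;> subst h <;> push_cast <;> ring
end
end

section
/- Let Z₁ = [[τ₁,z₁],[z₁,τ₁]] and Z₂ = [[τ₂,z₂],[z₂,τ₂]] be two points of Ĥ₂. Write τ₁+z₁ = x₁+iy₁, τ₁−z₁ = x₂+iy₂, τ₂+z₂ = u₁+iv₁, τ₂−z₂ = u₂+iv₂, and set A = (y₁² + v₁² + (x₁−u₁)²)/(y₁v₁) and B = (y₂² + v₂² + (x₂−u₂)²)/(y₂v₂). Then A ≥ 2, B ≥ 2, and the symplectic distance ρ(Z₁,Z₂) — the infimum of the symplectic lengths of piecewise continuously differentiable curves in Ĥ₂ joining Z₁ to Z₂ —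 equals ( log²((A+√(A²−4))/2) + log²((B+√(B²−4))/2) )^{1/2}. -/
open Matrix Complex

noncomputable section

/-- Entrywise complex conjugation of a matrix. -/
def conjM (Z : Mat2) : Mat2 := Z.map (starRingEnd ℂ)

/-- The imaginary part `Y = Im Z` of a complex matrix, as a real matrix. -/
def imPart (Z : Mat2) : Mat2R := Z.map Complex.im

/-- The symplectic quadratic form `tr(Y⁻¹ H Y⁻¹ conj H)` at the point `Z`
(with `Y = Im Z`), evaluated on the tangent `H`. -/
def metricForm (Z H : Mat2) : ℂ :=
  (((imPart Z)⁻¹).map Complex.ofReal * H * ((imPart Z)⁻¹).map Complex.ofReal *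
    conjM H).trace

/-- The bi-symmetric matrix curve `t ↦ [[f t, g t],[g t, f t]]`. -/
def mk (f g : ℝ → ℂ) (t : ℝ) : Mat2 := !![f t, g t; g t, f t]

/-- Symplectic length of one C¹ piece of a curve in `Ĥ₂`. -/
def pieceLen (τ z τ' z' : ℝ → ℂ) (a b : ℝ) : ℝ :=
  ∫ t in a..b, Real.sqrt ((metricForm (mk τ z t) (mk τ' z' t)).re)

/-- The set of symplectic lengths of piecewise C¹ curves in `Ĥ₂` joining the
point `[[T₁,Z₁],[Z₁,T₁]]` to the point `[[T₂,Z₂],[Z₂,T₂]]`. -/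
def joinLengths (T₁ Z₁ T₂ Z₂ : ℂ) : Set ℝ :=
  {ℓ | ∃ (n : ℕ) (t : ℕ → ℝ) (τ z : ℝ → ℂ) (τ' z' : ℕ → ℝ → ℂ),
    0 < n ∧ (∀ i < n, t i < t (i + 1)) ∧
    τ (t 0) = T₁ ∧ z (t 0) = Z₁ ∧ τ (t n) = T₂ ∧ z (t n) = Z₂ ∧
    (∀ s ∈ Set.Icc (t 0) (t n), mk τ z s ∈ Hhat) ∧
    (∀ i < n, ∀ s ∈ Set.Icc (t i) (t (i + 1)),
      HasDerivWithinAt τ (τ' i s) (Set.Icc (t i) (t (i + 1))) s ∧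
      HasDerivWithinAt z (z' i s) (Set.Icc (t i) (t (i + 1))) s) ∧
    (∀ i < n, ContinuousOn (τ' i) (Set.Icc (t i) (t (i + 1))) ∧
      ContinuousOn (z' i) (Set.Icc (t i) (t (i + 1)))) ∧
    ℓ = ∑ i ∈ Finset.range n, pieceLen τ z (τ' i) (z' i) (t i) (t (i + 1))}


set_option maxHeartbeats 1000000

namespace S18
open Set


def G (p q : ℂ) : ℝ := (p.im^2 + q.im^2 + (p.re - q.re)^2) / (2*(p.im*q.im))

lemma one_le_G {p q : ℂ} (hp : 0 < p.im) (hq : 0 < q.im) : 1 ≤ G p q := by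
  rw [G, le_div_iff₀ (by positivity)]; nlinarith [sq_nonneg (p.im - q.im), sq_nonneg (p.re - q.re)]

lemma hasDerivAt_arcoshlike {x : ℝ} (hx : 1 < x) :
    HasDerivAt (fun y => Real.log (y + Real.sqrt (y^2 - 1))) (1/Real.sqrt (x^2 - 1)) x := by
  have hs : 0 < x^2 - 1 := by nlinarith
  have hsq : 0 < Real.sqrt (x^2 - 1) := Real.sqrt_pos.2 hs
  have hd1 : HasDerivAt (fun y : ℝ => y^2 - 1) (2*x) x := by
    simpa using ((hasDerivAt_pow 2 x).sub_const 1)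
  have hd2 : HasDerivAt (fun y : ℝ => Real.sqrt (y^2 - 1)) (2*x/(2*Real.sqrt (x^2-1))) x :=
    (Real.hasDerivAt_sqrt hs.ne').comp x hd1 |>.congr_deriv (by ring)
  have hd3 : HasDerivAt (fun y : ℝ => y + Real.sqrt (y^2 - 1)) (1 + x/Real.sqrt (x^2-1)) x := by
    have := (hasDerivAt_id x).add hd2
    refine this.congr_deriv ?_
    field_simp
  have hpos : x + Real.sqrt (x^2 - 1) ≠ 0 := by positivity
  have := hd3.log hpos
  convert this using 1
  have h2 : Real.sqrt (x^2-1) * Real.sqrt (x^2-1) = x^2-1 := Real.mul_self_sqrt hs.le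
  field_simp
  nlinarith [h2]

lemma hdw_re {w : ℝ → ℂ} {c : ℂ} {s : Set ℝ} {x : ℝ} (h : HasDerivWithinAt w c s x) :
    HasDerivWithinAt (fun t => (w t).re) c.re s x :=
  Complex.reCLM.hasFDerivAt.comp_hasDerivWithinAt x h

lemma hdw_im {w : ℝ → ℂ} {c : ℂ} {s : Set ℝ} {x : ℝ} (h : HasDerivWithinAt w c s x) :
    HasDerivWithinAt (fun t => (w t).im) c.im s x :=
  Complex.imCLM.hasFDerivAt.comp_hasDerivWithinAt x h

lemma cs2 (p q r t : ℝ) : |p*r + q*t| ≤ Real.sqrt (p^2+q^2) * Real.sqrt (r^2+t^2) := by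
  rw [← Real.sqrt_sq_eq_abs, ← Real.sqrt_mul (by positivity)]
  exact Real.sqrt_le_sqrt (by nlinarith [sq_nonneg (p*t - q*r)])

lemma abs_eq_sqrt (v : ℂ) : norm v = Real.sqrt (v.re^2 + v.im^2) := by
  rw [Complex.norm_def, Complex.normSq_apply]; ring_nf

lemma piece_bound {a b : ℝ} (hab : a ≤ b) {w w' : ℝ → ℂ} {u : ℂ} (hu : 0 < u.im)
    {δ : ℝ} (hδ : 0 < δ)
    (hw : ∀ s ∈ Icc a b, HasDerivWithinAt w (w' s) (Icc a b) s)
    (hw' : ContinuousOn w' (Icc a b))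
    (him : ∀ s ∈ Icc a b, 0 < (w s).im) :
    Real.log (G (w b) u + δ + Real.sqrt ((G (w b) u + δ)^2 - 1)) -
      Real.log (G (w a) u + δ + Real.sqrt ((G (w a) u + δ)^2 - 1)) ≤
      ∫ s in a..b, norm (w' s) / (w s).im := by
  set g : ℝ → ℝ := fun s => G (w s) u with hg
  set g' : ℝ → ℝ := fun s =>
    ((2*(w s).im*(w' s).im + 2*((w s).re - u.re)*(w' s).re) * (2*((w s).im*u.im)) -
      ((w s).im^2 + u.im^2 + ((w s).re-u.re)^2) * (2*((w' s).im*u.im))) /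
      (2*((w s).im*u.im))^2 with hg'
  set φ : ℝ → ℝ := fun s => Real.log (g s + δ + Real.sqrt ((g s + δ)^2 - 1)) with hφ
  set φ' : ℝ → ℝ := fun s => g' s / Real.sqrt ((g s + δ)^2 - 1) with hφ'
  have hwc : ContinuousOn w (Icc a b) := fun s hs => (hw s hs).continuousWithinAt
  have gdef : ∀ t, g t = ((w t).im^2 + u.im^2 + ((w t).re-u.re)^2)/(2*((w t).im*u.im)) :=
    fun t => rfl
  -- derivative of g
  have hgd : ∀ s ∈ Icc a b, HasDerivWithinAt g (g' s) (Icc a b) s := by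
    intro s hs
    have hx := hdw_re (hw s hs)
    have hy := hdw_im (hw s hs)
    have hN : HasDerivWithinAt (fun t => (w t).im^2 + u.im^2 + ((w t).re - u.re)^2)
        (2*(w s).im*(w' s).im + 2*((w s).re - u.re)*(w' s).re) (Icc a b) s := by
      have := ((hy.pow 2).add_const (u.im^2)).add ((hx.sub_const u.re).pow 2)
      refine this.congr_deriv ?_
      push_cast; ring
    have hD : HasDerivWithinAt (fun t => 2*((w t).im*u.im)) (2*((w' s).im*u.im)) (Icc a b) s :=
      (hy.mul_const u.im).const_mul 2
    have hDne : 2*((w s).im*u.im) ≠ 0 := by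
      have := him s hs; positivity
    have hq := hN.div hD hDne
    exact hq.congr (fun t _ => gdef t) (gdef s)
  have hgc : ContinuousOn g (Icc a b) := fun s hs => (hgd s hs).continuousWithinAt
  have hone : ∀ s ∈ Icc a b, 1 ≤ g s := fun s hs => one_le_G (him s hs) hu
  have hSpos : ∀ s ∈ Icc a b, 0 < Real.sqrt ((g s + δ)^2 - 1) := by
    intro s hs
    exact Real.sqrt_pos.2 (by nlinarith [hone s hs])
  -- derivative of φ
  have hφd : ∀ s ∈ Icc a b, HasDerivWithinAt φ (φ' s) (Icc a b) s := by
    intro s hs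
    have h1 : (1:ℝ) < g s + δ := by linarith [hone s hs]
    have := (hasDerivAt_arcoshlike h1).comp_hasDerivWithinAt s ((hgd s hs).add_const δ)
    refine this.congr_deriv ?_
    rw [hφ']; ring
  have hφc : ContinuousOn φ (Icc a b) := fun s hs => (hφd s hs).continuousWithinAt
  -- pointwise bound
  have hbound : ∀ s ∈ Icc a b, φ' s ≤ norm (w' s) / (w s).im := by
    intro s hs
    have hY := him s hs
    have h1 : (1:ℝ) ≤ g s := hone s hs
    set X := (w s).re - u.re with hX
    set Y := (w s).im with hYd
    have hPQ : (X/(u.im*Y))^2 + ((Y^2 - X^2 - u.im^2)/(2*u.im*Y^2))^2 = ((g s)^2 - 1)/Y^2 := by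
      rw [gdef s, ← hX, ← hYd]
      field_simp
      ring
    have hgs : g' s = (X/(u.im*Y))*(w' s).re + ((Y^2 - X^2 - u.im^2)/(2*u.im*Y^2))*(w' s).im := by
      rw [hg']; simp only [hX, hYd]; have hY' : (w s).im ≠ 0 := hY.ne'; field_simp; ring
    have habs : (0:ℝ) ≤ norm (w' s) := norm_nonneg _
    have hski : |g' s| ≤ (Real.sqrt ((g s)^2 - 1)/Y) * norm (w' s) := by
      rw [hgs, abs_eq_sqrt]
      calc |(X/(u.im*Y))*(w' s).re + ((Y^2 - X^2 - u.im^2)/(2*u.im*Y^2))*(w' s).im|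
          ≤ Real.sqrt ((X/(u.im*Y))^2 + ((Y^2 - X^2 - u.im^2)/(2*u.im*Y^2))^2) *
            Real.sqrt ((w' s).re^2 + (w' s).im^2) := cs2 _ _ _ _
        _ = (Real.sqrt ((g s)^2 - 1)/Y) * Real.sqrt ((w' s).re^2 + (w' s).im^2) := by
            rw [hPQ, Real.sqrt_div (by nlinarith), Real.sqrt_sq hY.le]
    have hδ1 : (0:ℝ) < Real.sqrt ((g s + δ)^2 - 1) := hSpos s hs
    have hmono : Real.sqrt ((g s)^2 - 1) ≤ Real.sqrt ((g s + δ)^2 - 1) :=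
      Real.sqrt_le_sqrt (by nlinarith)
    have hfrac : Real.sqrt ((g s)^2 - 1) / Real.sqrt ((g s + δ)^2 - 1) ≤ 1 :=
      (div_le_one hδ1).2 hmono
    calc φ' s ≤ |g' s| / Real.sqrt ((g s + δ)^2 - 1) :=
          (div_le_div_iff_of_pos_right hδ1).2 (le_abs_self _)
      _ ≤ ((Real.sqrt ((g s)^2 - 1)/Y) * norm (w' s)) / Real.sqrt ((g s + δ)^2 - 1) :=
          (div_le_div_iff_of_pos_right hδ1).2 hski
      _ = (Real.sqrt ((g s)^2 - 1) / Real.sqrt ((g s + δ)^2 - 1)) * (norm (w' s) / Y) := by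
          ring
      _ ≤ 1 * (norm (w' s) / Y) := by
          exact mul_le_mul_of_nonneg_right hfrac (by positivity)
      _ = norm (w' s) / (w s).im := by rw [one_mul, hYd]
  -- continuity of φ'
  have him' : ContinuousOn (fun s => (w s).im) (Icc a b) := Complex.continuous_im.comp_continuousOn hwc
  have hre' : ContinuousOn (fun s => (w s).re) (Icc a b) := Complex.continuous_re.comp_continuousOn hwc
  have hwre : ContinuousOn (fun s => (w' s).re) (Icc a b) := Complex.continuous_re.comp_continuousOn hw'
  have hwim : ContinuousOn (fun s => (w' s).im) (Icc a b) := Complex.continuous_im.comp_continuousOn hw'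
  have hg'c : ContinuousOn g' (Icc a b) := by
    rw [hg']
    apply ContinuousOn.div
    · apply ContinuousOn.sub
      · exact (((continuousOn_const.mul him').mul hwim).add
          ((continuousOn_const.mul (hre'.sub continuousOn_const)).mul hwre)).mul
          (continuousOn_const.mul (him'.mul continuousOn_const))
      · exact (((him'.pow 2).add continuousOn_const).add
          ((hre'.sub continuousOn_const).pow 2)).mul
          (continuousOn_const.mul (hwim.mul continuousOn_const))
    · exact (continuousOn_const.mul (him'.mul continuousOn_const)).pow 2
    · intro s hs
      have := him s hs
      positivity
  have hSc : ContinuousOn (fun s => Real.sqrt ((g s + δ)^2 - 1)) (Icc a b) :=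
    Real.continuous_sqrt.comp_continuousOn (((hgc.add continuousOn_const).pow 2).sub continuousOn_const)
  have hφ'c : ContinuousOn φ' (Icc a b) := by
    rw [hφ']
    exact hg'c.div hSc (fun s hs => (hSpos s hs).ne')
  have hIcc : uIcc a b = Icc a b := uIcc_of_le hab
  have hInt : IntervalIntegrable φ' MeasureTheory.volume a b :=
    (hφ'c.mono (by rw [hIcc])).intervalIntegrable
  have hfc : ContinuousOn (fun s => norm (w' s) / (w s).im) (Icc a b) :=
    (continuous_norm.comp_continuousOn hw').div him' (fun s hs => (him s hs).ne')
  have hfInt : IntervalIntegrable (fun s => norm (w' s) / (w s).im) MeasureTheory.volume a b :=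
    (hfc.mono (by rw [hIcc])).intervalIntegrable
  have hder : ∀ x ∈ Ioo a b, HasDerivWithinAt φ (φ' x) (Ioi x) x := fun x hx =>
    ((hφd x (Ioo_subset_Icc_self hx)).hasDerivAt (Icc_mem_nhds hx.1 hx.2)).hasDerivWithinAt
  have hFTC := intervalIntegral.integral_eq_sub_of_hasDeriv_right_of_le hab hφc hder hInt
  have hmono := intervalIntegral.integral_mono_on hab hInt hfInt hbound
  rw [hFTC] at hmono
  exact hmono

def dH (p q : ℂ) : ℝ := Real.log (G p q + Real.sqrt ((G p q)^2 - 1))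

lemma sinh_abs (x : ℝ) : |Real.sinh x| = Real.sinh |x| := by
  rcases abs_cases x with ⟨h, _⟩ | ⟨h, hx⟩
  · rw [h, _root_.abs_of_nonneg (by rw [← Real.sinh_zero]; exact Real.sinh_le_sinh.2 (by rw [← h] at *; linarith [abs_nonneg x]))]
  · rw [h, Real.sinh_neg, _root_.abs_of_nonpos (by simpa using Real.sinh_le_sinh.2 hx.le)]

lemma log_cosh (x : ℝ) : Real.log (Real.cosh x + Real.sqrt ((Real.cosh x)^2 - 1)) = |x| := by
  have h1 : (Real.cosh x)^2 - 1 = (Real.sinh x)^2 := by rw [Real.cosh_sq]; ring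
  rw [h1, Real.sqrt_sq_eq_abs, sinh_abs, ← Real.cosh_abs, Real.cosh_add_sinh, Real.log_exp]

lemma exists_geod (p q : ℂ) (hp : 0 < p.im) (hq : 0 < q.im) :
    ∃ γ γ' : ℝ → ℂ, γ 0 = p ∧ γ 1 = q ∧ (∀ t, 0 < (γ t).im) ∧
      (∀ t, HasDerivAt γ (γ' t) t) ∧ Continuous γ' ∧
      ∀ t, norm (γ' t) = dH p q * (γ t).im := by
  by_cases hre : p.re = q.re
  · -- vertical geodesic
    set k := Real.log (q.im/p.im) with hk
    have hek : ∀ t : ℝ, 0 < p.im * Real.exp (k*t) := fun t => by positivity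
    refine ⟨fun t => (p.re : ℂ) + (p.im * Real.exp (k*t) : ℝ) * I,
        fun t => ((p.im * Real.exp (k*t) * k : ℝ) : ℂ) * I, ?_, ?_, ?_, ?_, ?_, ?_⟩
    · apply Complex.ext <;> simp [-Complex.ofReal_exp]
    · apply Complex.ext
      · simp [-Complex.ofReal_exp, hre]
      · simp only [Complex.add_im, Complex.ofReal_im, Complex.mul_im, Complex.ofReal_re,
          Complex.I_im, Complex.I_re, mul_zero, mul_one, zero_add, add_zero]
        rw [hk, Real.exp_log (div_pos hq hp)]
        field_simp
    · intro t
      have : ((p.re : ℂ) + ((p.im * Real.exp (k*t) : ℝ) : ℂ) * I).im = p.im * Real.exp (k*t) := by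
        simp [-Complex.ofReal_exp]
      rw [this]
      exact hek t
    · intro t
      have h1 : HasDerivAt (fun t : ℝ => p.im * Real.exp (k*t)) (p.im * Real.exp (k*t) * k) t := by
        have := (((hasDerivAt_id t).const_mul k).exp).const_mul p.im
        refine this.congr_deriv ?_
        simp only [id_eq, mul_one]
        ring
      have h2 := (h1.ofReal_comp).mul_const I
      exact (h2.const_add (p.re : ℂ))
    · apply Continuous.mul _ continuous_const
      apply Continuous.comp Complex.continuous_ofReal
      continuity
    · intro t
      have him : ((p.re : ℂ) + ((p.im * Real.exp (k*t) : ℝ) : ℂ) * I).im = p.im * Real.exp (k*t) := by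
        simp [-Complex.ofReal_exp]
      rw [him]
      have habs : norm (((p.im * Real.exp (k*t) * k : ℝ) : ℂ) * I) = |p.im * Real.exp (k*t) * k| := by
        rw [norm_mul, Complex.norm_I, Complex.norm_real, Real.norm_eq_abs, mul_one]
      rw [habs, abs_mul, _root_.abs_of_pos (hek t)]
      have hdH : dH p q = |k| := by
        have hG : G p q = Real.cosh k := by
          rw [G, hre, sub_self, Real.cosh_eq, hk, Real.exp_log (div_pos hq hp), ← Real.log_inv,
            Real.exp_log (by positivity)]
          field_simp
          ring
        rw [dH, hG, log_cosh]
      rw [hdH]; ring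
  · -- circular geodesic
    set c := (p.re^2 - q.re^2 + p.im^2 - q.im^2) / (2*(p.re - q.re)) with hc
    have hkey : (q.re - c)^2 + q.im^2 = (p.re - c)^2 + p.im^2 := by
      rw [hc]
      have h0 : p.re - q.re ≠ 0 := sub_ne_zero.2 hre
      field_simp
      ring
    set r := Real.sqrt ((p.re - c)^2 + p.im^2) with hr
    have hr2 : r^2 = (p.re - c)^2 + p.im^2 := Real.sq_sqrt (by positivity)
    have hrpos : 0 < r := Real.sqrt_pos.2 (by positivity)
    set α := Real.arsinh ((p.re - c)/p.im) with hα
    set β := Real.arsinh ((q.re - c)/q.im) with hβ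
    have hcoshα : Real.cosh α = r / p.im := by
      have h5 : 1 + ((p.re - c)/p.im)^2 = ((p.re-c)^2 + p.im^2)/p.im^2 := by
        field_simp; ring
      rw [hα, Real.cosh_arsinh, h5, Real.sqrt_div (by positivity), Real.sqrt_sq hp.le, hr]
    have hsinhα : Real.sinh α = (p.re - c)/p.im := Real.sinh_arsinh _
    have hcoshβ : Real.cosh β = r / q.im := by
      rw [hβ, Real.cosh_arsinh]
      have h6 : 1 + ((q.re - c)/q.im)^2 = ((p.re-c)^2 + p.im^2)/q.im^2 := by
        rw [← hkey]; field_simp; ring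
      rw [h6, Real.sqrt_div (by positivity), Real.sqrt_sq hq.le, hr]
    have hsinhβ : Real.sinh β = (q.re - c)/q.im := Real.sinh_arsinh _
    set θ : ℝ → ℝ := fun t => α + (β - α)*t with hθ
    have hcosh_pos : ∀ x : ℝ, 0 < Real.cosh x := Real.cosh_pos
    set x : ℝ → ℝ := fun t => c + r * (Real.sinh (θ t)/Real.cosh (θ t)) with hx
    set y : ℝ → ℝ := fun t => r / Real.cosh (θ t) with hy
    set x' : ℝ → ℝ := fun t => r * (β - α) / Real.cosh (θ t)^2 with hx'
    set y' : ℝ → ℝ := fun t => -(r * (β - α) * Real.sinh (θ t)) / Real.cosh (θ t)^2 with hy'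
    have hθd : ∀ t, HasDerivAt θ (β - α) t := by
      intro t
      have := ((hasDerivAt_id t).const_mul (β - α)).const_add α
      exact this.congr_deriv (mul_one _)
    have hxd : ∀ t, HasDerivAt x (x' t) t := by
      intro t
      have h1 := (Real.hasDerivAt_sinh (θ t)).comp t (hθd t)
      have h2 := (Real.hasDerivAt_cosh (θ t)).comp t (hθd t)
      have h3 := (h1.div h2 (hcosh_pos (θ t)).ne')
      have h4 := (h3.const_mul r).const_add c
      refine h4.congr_deriv ?_
      show r * ((Real.cosh (θ t) * (β - α) * Real.cosh (θ t) - Real.sinh (θ t) * (Real.sinh (θ t) * (β - α))) / Real.cosh (θ t) ^ 2) = r * (β - α) / Real.cosh (θ t) ^ 2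
      rw [show Real.cosh (θ t) * (β - α) * Real.cosh (θ t) - Real.sinh (θ t) * (Real.sinh (θ t) * (β - α)) = (β - α) by linear_combination (β - α) * Real.cosh_sq_sub_sinh_sq (θ t)]
      ring
    have hyd : ∀ t, HasDerivAt y (y' t) t := by
      intro t
      have h2 := (Real.hasDerivAt_cosh (θ t)).comp t (hθd t)
      have h3 := ((hasDerivAt_const t r).div h2 (hcosh_pos (θ t)).ne')
      refine h3.congr_deriv ?_
      show (0 * Real.cosh (θ t) - r * (Real.sinh (θ t) * (β - α))) / Real.cosh (θ t) ^ 2 = -(r * (β - α) * Real.sinh (θ t)) / Real.cosh (θ t) ^ 2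
      ring
    refine ⟨fun t => (x t : ℂ) + (y t : ℝ) * I, fun t => (x' t : ℂ) + (y' t : ℝ) * I,
        ?_, ?_, ?_, ?_, ?_, ?_⟩
    · have hθ0 : θ 0 = α := by rw [hθ]; simp
      have hx0 : x 0 = p.re := by
        rw [hx]; simp only; rw [hθ0, hsinhα, hcoshα]
        field_simp
        ring
      have hy0 : y 0 = p.im := by
        rw [hy]; simp only; rw [hθ0, hcoshα]
        field_simp
      apply Complex.ext
      · simpa using hx0
      · simpa using hy0
    · have hθ1 : θ 1 = β := by rw [hθ]; simp
      have hx1 : x 1 = q.re := by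
        rw [hx]; simp only; rw [hθ1, hsinhβ, hcoshβ]
        field_simp
        ring
      have hy1 : y 1 = q.im := by
        rw [hy]; simp only; rw [hθ1, hcoshβ]
        field_simp
      apply Complex.ext
      · simpa using hx1
      · simpa using hy1
    · intro t
      have : ((x t : ℂ) + (y t : ℝ) * I).im = y t := by simp
      rw [this, hy]
      positivity
    · intro t
      exact ((hxd t).ofReal_comp).add (((hyd t).ofReal_comp).mul_const I)
    · apply Continuous.add
      · apply Continuous.comp Complex.continuous_ofReal
        rw [hx']
        apply Continuous.div continuous_const
        · continuity
        · exact fun t => pow_ne_zero 2 (hcosh_pos (θ t)).ne'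
      · apply Continuous.mul _ continuous_const
        apply Continuous.comp Complex.continuous_ofReal
        rw [hy']
        apply Continuous.div
        · continuity
        · continuity
        · exact fun t => pow_ne_zero 2 (hcosh_pos (θ t)).ne'
    · intro t
      have him : ((x t : ℂ) + (y t : ℝ) * I).im = y t := by simp
      rw [him, abs_eq_sqrt]
      have hre2 : ((x' t : ℂ) + (y' t : ℝ) * I).re = x' t := by simp
      have him2 : ((x' t : ℂ) + (y' t : ℝ) * I).im = y' t := by simp
      rw [hre2, him2]
      have hsq : x' t^2 + y' t^2 = ((β - α) * y t)^2 := by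
        rw [hx', hy', hy]
        have hcne := (hcosh_pos (θ t)).ne'
        field_simp
        rw [Real.cosh_sq]
        ring
      rw [hsq, Real.sqrt_sq_eq_abs, abs_mul]
      have hdH : dH p q = |β - α| := by
        have hG : G p q = Real.cosh (β - α) := by
          rw [Real.cosh_sub, hcoshα, hcoshβ, hsinhα, hsinhβ, G]
          have h1 : r^2 = (q.re - c)^2 + q.im^2 := by rw [hr2, hkey]
          rw [div_mul_div_comm, div_mul_div_comm, div_sub_div_same,
            div_eq_div_iff (mul_pos two_pos (mul_pos hp hq)).ne' (mul_pos hq hp).ne']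
          linear_combination (-(p.im*q.im)) * hr2 + (-(p.im*q.im)) * h1
        rw [dH, hG, log_cosh]
      rw [hdH, _root_.abs_of_pos (show 0 < y t by rw [hy]; positivity)]


lemma map_fin_two {α β : Type*} (f : α → β) (a b c d : α) :
    (!![a, b; c, d]).map f = !![f a, f b; f c, f d] := by
  ext i j; fin_cases i <;> fin_cases j <;> simp
lemma inv_bisym {y s : ℝ} (h : y^2 - s^2 ≠ 0) :
    (!![y, s; s, y] : Mat2R)⁻¹ = !![y/(y^2-s^2), -s/(y^2-s^2); -s/(y^2-s^2), y/(y^2-s^2)] := by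
  apply Matrix.inv_eq_right_inv
  ext i j
  fin_cases i <;> fin_cases j <;>
    simp [Matrix.mul_apply, Fin.sum_univ_two] <;> field_simp <;> ring

lemma metric_re (τ z τ' z' : ℂ) (h : |z.im| < τ.im) :
    (metricForm !![τ, z; z, τ] !![τ', z'; z', τ']).re =
      Complex.normSq (τ' + z') / (τ.im + z.im)^2 + Complex.normSq (τ' - z') / (τ.im - z.im)^2 := by
  obtain ⟨h1, h2⟩ := abs_lt.1 h
  have hps : 0 < τ.im + z.im := by linarith
  have hms : 0 < τ.im - z.im := by linarith
  have hD : τ.im^2 - z.im^2 ≠ 0 := by nlinarith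
  have him : imPart !![τ, z; z, τ] = !![τ.im, z.im; z.im, τ.im] := by
    rw [imPart, map_fin_two]
  rw [metricForm, him, inv_bisym hD, map_fin_two, conjM, map_fin_two]
  rw [Matrix.mul_fin_two, Matrix.mul_fin_two, Matrix.mul_fin_two, Matrix.trace_fin_two_of]
  set Ac : ℂ := ((τ.im/(τ.im^2 - z.im^2) : ℝ) : ℂ) with hAc
  set Bc : ℂ := ((-z.im/(τ.im^2 - z.im^2) : ℝ) : ℂ) with hBc
  have e1 : (τ.im/(τ.im^2 - z.im^2) : ℝ) + (-z.im/(τ.im^2 - z.im^2) : ℝ) = 1/(τ.im + z.im) := by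
    rw [← add_div, div_eq_div_iff hD (ne_of_gt hps)]; ring
  have e2 : (τ.im/(τ.im^2 - z.im^2) : ℝ) - (-z.im/(τ.im^2 - z.im^2) : ℝ) = 1/(τ.im - z.im) := by
    rw [← sub_div, div_eq_div_iff hD (ne_of_gt hms)]; ring
  have e1c : Ac + Bc = 1/((τ.im + z.im : ℝ) : ℂ) := by
    rw [hAc, hBc, ← Complex.ofReal_add, e1]; push_cast; ring
  have e2c : Ac - Bc = 1/((τ.im - z.im : ℝ) : ℂ) := by
    rw [hAc, hBc, ← Complex.ofReal_sub, e2]; push_cast; ring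
  have key : ((Ac * τ' + Bc * z') * Ac + (Ac * z' + Bc * τ') * Bc) * (starRingEnd ℂ) τ' +
        ((Ac * τ' + Bc * z') * Bc + (Ac * z' + Bc * τ') * Ac) * (starRingEnd ℂ) z' +
        (((Bc * τ' + Ac * z') * Ac + (Bc * z' + Ac * τ') * Bc) * (starRingEnd ℂ) z' +
        ((Bc * τ' + Ac * z') * Bc + (Bc * z' + Ac * τ') * Ac) * (starRingEnd ℂ) τ') =
      (Ac + Bc)^2 * ((τ' + z') * (starRingEnd ℂ) (τ' + z')) +
        (Ac - Bc)^2 * ((τ' - z') * (starRingEnd ℂ) (τ' - z')) := by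
    simp only [map_add, map_sub]; ring
  rw [key, e1c, e2c, Complex.mul_conj, Complex.mul_conj]
  have fin : (1/((τ.im + z.im:ℝ):ℂ))^2 * (Complex.normSq (τ'+z') : ℂ) +
      (1/((τ.im - z.im:ℝ):ℂ))^2 * (Complex.normSq (τ'-z') : ℂ) =
      ((Complex.normSq (τ'+z') / (τ.im+z.im)^2 + Complex.normSq (τ'-z')/(τ.im-z.im)^2 : ℝ) : ℂ) := by
    have n1 : ((τ.im + z.im:ℝ):ℂ) ≠ 0 := Complex.ofReal_ne_zero.2 hps.ne'
    have n2 : ((τ.im - z.im:ℝ):ℂ) ≠ 0 := Complex.ofReal_ne_zero.2 hms.ne'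
    push_cast
    field_simp
  rw [fin, Complex.ofReal_re]

lemma dH_comm (p q : ℂ) : dH p q = dH q p := by
  have : G p q = G q p := by rw [G, G]; congr 1 <;> ring
  rw [dH, dH, this]

lemma dH_nonneg {p q : ℂ} (hp : 0 < p.im) (hq : 0 < q.im) : 0 ≤ dH p q :=
  Real.log_nonneg (le_add_of_le_of_nonneg (one_le_G hp hq) (Real.sqrt_nonneg _))

lemma half_im (w : ℂ) : (w/2).im = w.im/2 := by
  rw [show (2:ℂ) = ((2:ℝ):ℂ) by norm_num, Complex.div_ofReal_im]

lemma upper_mem (τ₁ z₁ τ₂ z₂ : ℂ)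
    (h₁ : |z₁.im| < τ₁.im) (h₂ : |z₂.im| < τ₂.im) :
    Real.sqrt (dH (τ₁ + z₁) (τ₂ + z₂)^2 + dH (τ₁ - z₁) (τ₂ - z₂)^2) ∈
      joinLengths τ₁ z₁ τ₂ z₂ := by
  obtain ⟨ha1, ha2⟩ := abs_lt.1 h₁
  obtain ⟨hb1, hb2⟩ := abs_lt.1 h₂
  have hp1 : 0 < (τ₁ + z₁).im := by rw [Complex.add_im]; linarith
  have hp2 : 0 < (τ₁ - z₁).im := by rw [Complex.sub_im]; linarith
  have hq1 : 0 < (τ₂ + z₂).im := by rw [Complex.add_im]; linarith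
  have hq2 : 0 < (τ₂ - z₂).im := by rw [Complex.sub_im]; linarith
  obtain ⟨γ₁, γ₁', hγ10, hγ11, hγ1im, hγ1d, hγ1c, hγ1s⟩ :=
    exists_geod (τ₁ + z₁) (τ₂ + z₂) hp1 hq1
  obtain ⟨γ₂, γ₂', hγ20, hγ21, hγ2im, hγ2d, hγ2c, hγ2s⟩ :=
    exists_geod (τ₁ - z₁) (τ₂ - z₂) hp2 hq2
  set d₁ := dH (τ₁ + z₁) (τ₂ + z₂) with hd₁
  set d₂ := dH (τ₁ - z₁) (τ₂ - z₂) with hd₂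
  have hhat : ∀ s : ℝ, |((γ₁ s - γ₂ s)/2).im| < ((γ₁ s + γ₂ s)/2).im := by
    intro s
    rw [half_im, half_im, Complex.sub_im, Complex.add_im, abs_lt]
    constructor <;> [skip; skip] <;>
      · have i1 := hγ1im s
        have i2 := hγ2im s
        linarith
  refine ⟨1, fun i => (i : ℝ), fun s => (γ₁ s + γ₂ s)/2, fun s => (γ₁ s - γ₂ s)/2,
    fun _ s => (γ₁' s + γ₂' s)/2, fun _ s => (γ₁' s - γ₂' s)/2,
    one_pos, ?_, ?_, ?_, ?_, ?_, ?_, ?_, ?_, ?_⟩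
  · intro i _; show (i:ℝ) < ((i+1:ℕ):ℝ); exact_mod_cast Nat.lt_succ_self i
  · push_cast; rw [hγ10, hγ20]; ring
  · push_cast; rw [hγ10, hγ20]; ring
  · push_cast; rw [hγ11, hγ21]; ring
  · push_cast; rw [hγ11, hγ21]; ring
  · intro s _
    refine ⟨rfl, rfl, ?_⟩
    have e1 : (mk (fun s => (γ₁ s + γ₂ s)/2) (fun s => (γ₁ s - γ₂ s)/2) s) 0 1
        = (γ₁ s - γ₂ s)/2 := by simp [_root_.mk]
    have e2 : (mk (fun s => (γ₁ s + γ₂ s)/2) (fun s => (γ₁ s - γ₂ s)/2) s) 0 0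
        = (γ₁ s + γ₂ s)/2 := by simp [_root_.mk]
    rw [e1, e2]
    exact hhat s
  · intro i _ s _
    constructor
    · exact (((hγ1d s).add (hγ2d s)).div_const 2).hasDerivWithinAt
    · exact (((hγ1d s).sub (hγ2d s)).div_const 2).hasDerivWithinAt
  · intro i _
    exact ⟨((hγ1c.add hγ2c).div_const 2).continuousOn,
      ((hγ1c.sub hγ2c).div_const 2).continuousOn⟩
  · rw [Finset.sum_range_one]
    have hconst : ∀ s : ℝ, Real.sqrt ((metricForm
        (mk (fun s => (γ₁ s + γ₂ s)/2) (fun s => (γ₁ s - γ₂ s)/2) s)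
        (mk (fun s => (γ₁' s + γ₂' s)/2) (fun s => (γ₁' s - γ₂' s)/2) s)).re)
        = Real.sqrt (d₁^2 + d₂^2) := by
      intro s
      have hme := metric_re ((γ₁ s + γ₂ s)/2) ((γ₁ s - γ₂ s)/2)
        ((γ₁' s + γ₂' s)/2) ((γ₁' s - γ₂' s)/2) (hhat s)
      rw [_root_.mk, _root_.mk, hme]
      have ed1 : (γ₁' s + γ₂' s)/2 + (γ₁' s - γ₂' s)/2 = γ₁' s := by ring
      have ed2 : (γ₁' s + γ₂' s)/2 - (γ₁' s - γ₂' s)/2 = γ₂' s := by ring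
      have ey1 : ((γ₁ s + γ₂ s)/2).im + ((γ₁ s - γ₂ s)/2).im = (γ₁ s).im := by
        rw [half_im, half_im, Complex.add_im, Complex.sub_im]; ring
      have ey2 : ((γ₁ s + γ₂ s)/2).im - ((γ₁ s - γ₂ s)/2).im = (γ₂ s).im := by
        rw [half_im, half_im, Complex.add_im, Complex.sub_im]; ring
      rw [ed1, ed2, ey1, ey2]
      congr 1
      have i1 := (hγ1im s).ne'
      have i2 := (hγ2im s).ne'
      have n1 : Complex.normSq (γ₁' s) = (d₁ * (γ₁ s).im)^2 := by
        rw [← Complex.sq_norm, hγ1s s]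
      have n2 : Complex.normSq (γ₂' s) = (d₂ * (γ₂ s).im)^2 := by
        rw [← Complex.sq_norm, hγ2s s]
      rw [n1, n2, mul_pow, mul_pow, mul_div_assoc, mul_div_assoc,
        div_self (pow_ne_zero 2 i1), div_self (pow_ne_zero 2 i2), mul_one, mul_one]
    show Real.sqrt (d₁^2 + d₂^2) = pieceLen _ _ _ _ _ _
    rw [pieceLen]
    push_cast
    simp only [hconst]
    rw [intervalIntegral.integral_const]
    norm_num

lemma G_self {p : ℂ} (hp : 0 < p.im) : G p p = 1 := by
  rw [G]; field_simp; ring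

lemma lower_le (τ₁ z₁ τ₂ z₂ : ℂ)
    (h₁ : |z₁.im| < τ₁.im) (h₂ : |z₂.im| < τ₂.im) :
    ∀ ℓ ∈ joinLengths τ₁ z₁ τ₂ z₂,
      Real.sqrt (dH (τ₁ + z₁) (τ₂ + z₂)^2 + dH (τ₁ - z₁) (τ₂ - z₂)^2) ≤ ℓ := by
  obtain ⟨ha1, ha2⟩ := abs_lt.1 h₁
  obtain ⟨hb1, hb2⟩ := abs_lt.1 h₂
  have hp1 : 0 < (τ₁ + z₁).im := by rw [Complex.add_im]; linarith
  have hp2 : 0 < (τ₁ - z₁).im := by rw [Complex.sub_im]; linarith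
  have hq1 : 0 < (τ₂ + z₂).im := by rw [Complex.add_im]; linarith
  have hq2 : 0 < (τ₂ - z₂).im := by rw [Complex.sub_im]; linarith
  intro ℓ hℓ
  obtain ⟨n, t, τ, z, τ', z', hn, ht, hτ0, hz0, hτn, hzn, hH, hder, hcont, hsum⟩ := hℓ
  -- monotonicity of partition
  have tmono : ∀ j, j ≤ n → ∀ i, i ≤ j → t i ≤ t j := by
    intro j
    induction j with
    | zero =>
      intro _ i hi
      have : i = 0 := by omega
      rw [this]
    | succ m ih =>
      intro hj i hi
      rcases Nat.lt_or_ge i (m+1) with h | h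
      · exact le_trans (ih (by omega) i (by omega)) (le_of_lt (ht m (by omega)))
      · have : i = m + 1 := by omega
        rw [this]
  have hsub : ∀ i, i < n → Icc (t i) (t (i+1)) ⊆ Icc (t 0) (t n) := fun i hi =>
    Icc_subset_Icc (tmono i (by omega) 0 (by omega)) (tmono n le_rfl (i+1) (by omega))
  have hhat : ∀ s ∈ Icc (t 0) (t n), |(z s).im| < (τ s).im := by
    intro s hs
    have h3 := (hH s hs).2.2
    have e1 : (mk τ z s) 0 1 = z s := by simp [_root_.mk]
    have e2 : (mk τ z s) 0 0 = τ s := by simp [_root_.mk]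
    rwa [e1, e2] at h3
  have him1 : ∀ s ∈ Icc (t 0) (t n), 0 < (τ s + z s).im := by
    intro s hs
    have := abs_lt.1 (hhat s hs)
    rw [Complex.add_im]; linarith [this.1, this.2]
  have him2 : ∀ s ∈ Icc (t 0) (t n), 0 < (τ s - z s).im := by
    intro s hs
    have := abs_lt.1 (hhat s hs)
    rw [Complex.sub_im]; linarith [this.1, this.2]
  have hab : ∀ i, i < n → t i ≤ t (i+1) := fun i hi => (ht i hi).le
  -- piece data
  set w₁ : ℝ → ℂ := fun s => τ s + z s with hw₁
  set w₂ : ℝ → ℂ := fun s => τ s - z s with hw₂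
  set I1 : ℕ → ℝ := fun i => ∫ s in t i..t (i+1), norm (τ' i s + z' i s) / (w₁ s).im with hI1
  set I2 : ℕ → ℝ := fun i => ∫ s in t i..t (i+1), norm (τ' i s - z' i s) / (w₂ s).im with hI2
  have hw₁d : ∀ i, i < n → ∀ s ∈ Icc (t i) (t (i+1)),
      HasDerivWithinAt w₁ (τ' i s + z' i s) (Icc (t i) (t (i+1))) s := by
    intro i hi s hs
    exact ((hder i hi s hs).1).add ((hder i hi s hs).2)
  have hw₂d : ∀ i, i < n → ∀ s ∈ Icc (t i) (t (i+1)),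
      HasDerivWithinAt w₂ (τ' i s - z' i s) (Icc (t i) (t (i+1))) s := by
    intro i hi s hs
    exact ((hder i hi s hs).1).sub ((hder i hi s hs).2)
  have hw₁'c : ∀ i, i < n → ContinuousOn (fun s => τ' i s + z' i s) (Icc (t i) (t (i+1))) :=
    fun i hi => ((hcont i hi).1).add ((hcont i hi).2)
  have hw₂'c : ∀ i, i < n → ContinuousOn (fun s => τ' i s - z' i s) (Icc (t i) (t (i+1))) :=
    fun i hi => ((hcont i hi).1).sub ((hcont i hi).2)
  -- Claim A : per-piece length lower bound
  have claimA : ∀ i, i < n →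
      Real.sqrt ((I1 i)^2 + (I2 i)^2) ≤ pieceLen τ z (τ' i) (z' i) (t i) (t (i+1))  := by
    intro i hi
    set a := t i
    set b := t (i+1)
    have hab' : a ≤ b := hab i hi
    set F1 : ℝ → ℝ := fun s => norm (τ' i s + z' i s) / (w₁ s).im with hF1
    set F2 : ℝ → ℝ := fun s => norm (τ' i s - z' i s) / (w₂ s).im with hF2
    have hw₁c : ContinuousOn w₁ (Icc a b) := fun s hs => (hw₁d i hi s hs).continuousWithinAt
    have hw₂c : ContinuousOn w₂ (Icc a b) := fun s hs => (hw₂d i hi s hs).continuousWithinAt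
    have hF1c : ContinuousOn F1 (Icc a b) :=
      (continuous_norm.comp_continuousOn (hw₁'c i hi)).div
        (Complex.continuous_im.comp_continuousOn hw₁c)
        (fun s hs => (him1 s (hsub i hi hs)).ne')
    have hF2c : ContinuousOn F2 (Icc a b) :=
      (continuous_norm.comp_continuousOn (hw₂'c i hi)).div
        (Complex.continuous_im.comp_continuousOn hw₂c)
        (fun s hs => (him2 s (hsub i hi hs)).ne')
    set V : ℝ → ℂ := fun s => (F1 s : ℂ) + (F2 s : ℂ)*I with hV
    have hIcceq : uIcc a b = Icc a b := uIcc_of_le hab'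
    have hInt1 : IntervalIntegrable (fun s => ((F1 s : ℝ) : ℂ)) MeasureTheory.volume a b :=
      ((Complex.continuous_ofReal.comp_continuousOn hF1c).mono (by rw [hIcceq])).intervalIntegrable
    have hInt2 : IntervalIntegrable (fun s => ((F2 s : ℝ) : ℂ)*I) MeasureTheory.volume a b :=
      (((Complex.continuous_ofReal.comp_continuousOn hF2c).mul continuousOn_const).mono
        (by rw [hIcceq])).intervalIntegrable
    have hVint : ∫ s in a..b, V s = ((I1 i : ℝ) : ℂ) + ((I2 i : ℝ) : ℂ)*I := by
      rw [hV]
      rw [intervalIntegral.integral_add hInt1 hInt2, intervalIntegral.integral_mul_const,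
        intervalIntegral.integral_ofReal, intervalIntegral.integral_ofReal]
    have hnorm : ∀ s : ℝ, ‖V s‖ = Real.sqrt (F1 s^2 + F2 s^2) := by
      intro s
      rw [hV, abs_eq_sqrt]
      congr 2 <;> simp
    have hbig : Real.sqrt ((I1 i)^2 + (I2 i)^2) ≤ ∫ s in a..b, Real.sqrt (F1 s^2 + F2 s^2) := by
      have h5 := intervalIntegral.norm_integral_le_integral_norm (f := V)
        (μ := MeasureTheory.volume) hab'
      rw [hVint] at h5
      have h6 : ‖((I1 i : ℝ) : ℂ) + ((I2 i : ℝ) : ℂ)*I‖ = Real.sqrt ((I1 i)^2 + (I2 i)^2) := by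
        rw [abs_eq_sqrt]
        congr 2 <;> simp
      rw [h6] at h5
      calc Real.sqrt ((I1 i)^2 + (I2 i)^2) ≤ ∫ s in a..b, ‖V s‖ := h5
        _ = ∫ s in a..b, Real.sqrt (F1 s^2 + F2 s^2) := by
            apply intervalIntegral.integral_congr
            intro s _
            exact hnorm s
    refine le_trans hbig (le_of_eq ?_)
    rw [pieceLen]
    apply intervalIntegral.integral_congr
    intro s hs
    rw [hIcceq] at hs
    have hme := metric_re (τ s) (z s) (τ' i s) (z' i s) (hhat s (hsub i hi hs))
    have e0 : _root_.mk τ z s = !![τ s, z s; z s, τ s] := rfl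
    have e0' : _root_.mk (τ' i) (z' i) s = !![τ' i s, z' i s; z' i s, τ' i s] := rfl
    show Real.sqrt (F1 s^2 + F2 s^2) =
      Real.sqrt ((metricForm (_root_.mk τ z s) (_root_.mk (τ' i) (z' i) s)).re)
    rw [e0, e0', hme]
    have r1 : F1 s^2 = Complex.normSq (τ' i s + z' i s) / ((τ s).im + (z s).im)^2 := by
      simp only [hF1, hw₁]; rw [div_pow, Complex.sq_norm, Complex.add_im]
    have r2 : F2 s^2 = Complex.normSq (τ' i s - z' i s) / ((τ s).im - (z s).im)^2 := by
      simp only [hF2, hw₂]; rw [div_pow, Complex.sq_norm, Complex.sub_im]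
    rw [r1, r2]
  -- Claim B/C : component totals dominate hyperbolic distances
  have claimBC : ∀ (w : ℝ → ℂ) (w' : ℕ → ℝ → ℂ) (J : ℕ → ℝ) (u q : ℂ),
      0 < u.im → 0 < q.im → w (t 0) = u → w (t n) = q →
      (∀ s ∈ Icc (t 0) (t n), 0 < (w s).im) →
      (∀ i, i < n → ∀ s ∈ Icc (t i) (t (i+1)),
        HasDerivWithinAt w (w' i s) (Icc (t i) (t (i+1))) s) →
      (∀ i, i < n → ContinuousOn (w' i) (Icc (t i) (t (i+1)))) →
      (∀ i, i < n → J i = ∫ s in t i..t (i+1), norm (w' i s) / (w s).im) →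
      dH u q ≤ ∑ i ∈ Finset.range n, J i := by
    intro w w' J u q hu hq hw0 hwn himw hwd hw'c hJ
    have hstep : ∀ δ : ℝ, 0 < δ →
        Real.log (G q u + δ + Real.sqrt ((G q u + δ)^2 - 1)) -
          Real.log (1 + δ + Real.sqrt ((1+δ)^2 - 1)) ≤ ∑ i ∈ Finset.range n, J i := by
      intro δ hδ
      set f : ℕ → ℝ := fun i =>
        Real.log (G (w (t i)) u + δ + Real.sqrt ((G (w (t i)) u + δ)^2 - 1)) with hf
      have hsumtel : ∑ i ∈ Finset.range n, (f (i+1) - f i) = f n - f 0 :=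
        Finset.sum_range_sub f n
      have hpiece : ∀ i ∈ Finset.range n, f (i+1) - f i ≤ J i := by
        intro i hi'
        have hi := Finset.mem_range.1 hi'
        rw [hJ i hi]
        exact piece_bound (hab i hi) hu hδ (hwd i hi) (hw'c i hi)
          (fun s hs => himw s (hsub i hi hs))
      have := Finset.sum_le_sum hpiece
      rw [hsumtel] at this
      have hf0 : f 0 = Real.log (1 + δ + Real.sqrt ((1+δ)^2 - 1)) := by
        rw [hf]; simp only [hw0, G_self hu]
      have hfn : f n = Real.log (G q u + δ + Real.sqrt ((G q u + δ)^2 - 1)) := by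
        rw [hf]; simp only [hwn]
      rw [hf0, hfn] at this
      exact this
    -- take the limit δ → 0⁺
    set h : ℝ → ℝ := fun δ =>
      Real.log (G q u + δ + Real.sqrt ((G q u + δ)^2 - 1)) -
        Real.log (1 + δ + Real.sqrt ((1+δ)^2 - 1)) with hh
    have hGqu := one_le_G hq hu
    have hcont0 : ContinuousAt h 0 := by
      apply ContinuousAt.sub
      · apply Real.continuousAt_log ?hne |>.comp
        · exact ((continuous_const.add continuous_id).add (Real.continuous_sqrt.comp
            (((continuous_const.add continuous_id).pow 2).sub continuous_const))).continuousAt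
        · simp only [add_zero]
          positivity
      · apply Real.continuousAt_log ?hne2 |>.comp
        · exact ((continuous_const.add continuous_id).add (Real.continuous_sqrt.comp
            (((continuous_const.add continuous_id).pow 2).sub continuous_const))).continuousAt
        · simp only [add_zero]
          positivity
    have hh0 : h 0 = dH q u := by
      rw [hh]
      norm_num [dH]
    have htends : Filter.Tendsto h (nhdsWithin 0 (Set.Ioi 0)) (nhds (dH q u)) := by
      rw [← hh0]
      exact (hcont0.tendsto).mono_left nhdsWithin_le_nhds
    have hev : ∀ᶠ δ in nhdsWithin 0 (Set.Ioi 0), h δ ≤ ∑ i ∈ Finset.range n, J i := by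
      apply eventually_nhdsWithin_of_forall
      intro δ hδ
      exact hstep δ hδ
    have := le_of_tendsto htends hev
    rwa [dH_comm] at this
  -- apply to both components
  have hL1 : dH (τ₁ + z₁) (τ₂ + z₂) ≤ ∑ i ∈ Finset.range n, I1 i := by
    apply claimBC w₁ (fun i s => τ' i s + z' i s) I1 (τ₁ + z₁) (τ₂ + z₂) hp1 hq1
    · rw [hw₁]; simp only; rw [hτ0, hz0]
    · rw [hw₁]; simp only; rw [hτn, hzn]
    · exact him1
    · exact hw₁d
    · exact hw₁'c
    · intro i hi; rw [hI1]
  have hL2 : dH (τ₁ - z₁) (τ₂ - z₂) ≤ ∑ i ∈ Finset.range n, I2 i := by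
    apply claimBC w₂ (fun i s => τ' i s - z' i s) I2 (τ₁ - z₁) (τ₂ - z₂) hp2 hq2
    · rw [hw₂]; simp only; rw [hτ0, hz0]
    · rw [hw₂]; simp only; rw [hτn, hzn]
    · exact him2
    · exact hw₂d
    · exact hw₂'c
    · intro i hi; rw [hI2]
  -- triangle inequality over the pieces
  have htri : Real.sqrt ((∑ i ∈ Finset.range n, I1 i)^2 + (∑ i ∈ Finset.range n, I2 i)^2) ≤
      ∑ i ∈ Finset.range n, Real.sqrt ((I1 i)^2 + (I2 i)^2) := by
    set cseq : ℕ → ℂ := fun i => ((I1 i : ℝ) : ℂ) + ((I2 i : ℝ) : ℂ)*I with hcseq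
    have h7 : ‖∑ i ∈ Finset.range n, cseq i‖ ≤ ∑ i ∈ Finset.range n, ‖cseq i‖ :=
      norm_sum_le _ _
    have h8 : ∑ i ∈ Finset.range n, cseq i =
        ((∑ i ∈ Finset.range n, I1 i : ℝ) : ℂ) + ((∑ i ∈ Finset.range n, I2 i : ℝ) : ℂ)*I := by
      rw [hcseq, Finset.sum_add_distrib, ← Finset.sum_mul]
      push_cast
      ring
    have h9 : ∀ i, ‖cseq i‖ = Real.sqrt ((I1 i)^2 + (I2 i)^2) := by
      intro i
      rw [hcseq, abs_eq_sqrt]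
      congr 2 <;> simp
    have h10 : ‖((∑ i ∈ Finset.range n, I1 i : ℝ) : ℂ) + ((∑ i ∈ Finset.range n, I2 i : ℝ) : ℂ)*I‖
        = Real.sqrt ((∑ i ∈ Finset.range n, I1 i)^2 + (∑ i ∈ Finset.range n, I2 i)^2) := by
      rw [abs_eq_sqrt]
      congr 2 <;> simp
    rw [h8, h10] at h7
    calc Real.sqrt ((∑ i ∈ Finset.range n, I1 i)^2 + (∑ i ∈ Finset.range n, I2 i)^2)
        ≤ ∑ i ∈ Finset.range n, ‖cseq i‖ := h7
      _ = ∑ i ∈ Finset.range n, Real.sqrt ((I1 i)^2 + (I2 i)^2) := by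
          exact Finset.sum_congr rfl (fun i _ => h9 i)
  -- final chain
  have hd1 := dH_nonneg hp1 hq1
  have hd2 := dH_nonneg hp2 hq2
  calc Real.sqrt (dH (τ₁ + z₁) (τ₂ + z₂)^2 + dH (τ₁ - z₁) (τ₂ - z₂)^2)
      ≤ Real.sqrt ((∑ i ∈ Finset.range n, I1 i)^2 + (∑ i ∈ Finset.range n, I2 i)^2) := by
        apply Real.sqrt_le_sqrt
        have e1 : dH (τ₁ + z₁) (τ₂ + z₂)^2 ≤ (∑ i ∈ Finset.range n, I1 i)^2 :=
          pow_le_pow_left₀ hd1 hL1 2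
        have e2 : dH (τ₁ - z₁) (τ₂ - z₂)^2 ≤ (∑ i ∈ Finset.range n, I2 i)^2 :=
          pow_le_pow_left₀ hd2 hL2 2
        linarith
    _ ≤ ∑ i ∈ Finset.range n, Real.sqrt ((I1 i)^2 + (I2 i)^2) := htri
    _ ≤ ∑ i ∈ Finset.range n, pieceLen τ z (τ' i) (z' i) (t i) (t (i+1)) :=
        Finset.sum_le_sum (fun i hi => claimA i (Finset.mem_range.1 hi))
    _ = ℓ := hsum.symm

end S18


/-- the explicit formula for the symplectic distance between two
points `Z₁ = [[τ₁,z₁],[z₁,τ₁]]` and `Z₂ = [[τ₂,z₂],[z₂,τ₂]]` of `Ĥ₂`. -/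
theorem stmt_18 (τ₁ z₁ τ₂ z₂ : ℂ)
    (h₁ : |z₁.im| < τ₁.im) (h₂ : |z₂.im| < τ₂.im) :
    2 ≤ ((τ₁ + z₁).im ^ 2 + (τ₂ + z₂).im ^ 2 + ((τ₁ + z₁).re - (τ₂ + z₂).re) ^ 2) /
        ((τ₁ + z₁).im * (τ₂ + z₂).im) ∧
    2 ≤ ((τ₁ - z₁).im ^ 2 + (τ₂ - z₂).im ^ 2 + ((τ₁ - z₁).re - (τ₂ - z₂).re) ^ 2) /
        ((τ₁ - z₁).im * (τ₂ - z₂).im) ∧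
    sInf (joinLengths τ₁ z₁ τ₂ z₂) =
      Real.sqrt
        (Real.log ((((τ₁ + z₁).im ^ 2 + (τ₂ + z₂).im ^ 2 +
              ((τ₁ + z₁).re - (τ₂ + z₂).re) ^ 2) / ((τ₁ + z₁).im * (τ₂ + z₂).im) +
            Real.sqrt ((((τ₁ + z₁).im ^ 2 + (τ₂ + z₂).im ^ 2 +
              ((τ₁ + z₁).re - (τ₂ + z₂).re) ^ 2) / ((τ₁ + z₁).im * (τ₂ + z₂).im)) ^ 2 - 4)) / 2) ^ 2 +
         Real.log ((((τ₁ - z₁).im ^ 2 + (τ₂ - z₂).im ^ 2 +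
              ((τ₁ - z₁).re - (τ₂ - z₂).re) ^ 2) / ((τ₁ - z₁).im * (τ₂ - z₂).im) +
            Real.sqrt ((((τ₁ - z₁).im ^ 2 + (τ₂ - z₂).im ^ 2 +
              ((τ₁ - z₁).re - (τ₂ - z₂).re) ^ 2) / ((τ₁ - z₁).im * (τ₂ - z₂).im)) ^ 2 - 4)) / 2) ^ 2) := by
  obtain ⟨ha1, ha2⟩ := abs_lt.1 h₁
  obtain ⟨hb1, hb2⟩ := abs_lt.1 h₂
  have hp1 : 0 < (τ₁ + z₁).im := by rw [Complex.add_im]; linarith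
  have hp2 : 0 < (τ₁ - z₁).im := by rw [Complex.sub_im]; linarith
  have hq1 : 0 < (τ₂ + z₂).im := by rw [Complex.add_im]; linarith
  have hq2 : 0 < (τ₂ - z₂).im := by rw [Complex.sub_im]; linarith
  have key1 : ((τ₁ + z₁).im ^ 2 + (τ₂ + z₂).im ^ 2 + ((τ₁ + z₁).re - (τ₂ + z₂).re) ^ 2) /
      ((τ₁ + z₁).im * (τ₂ + z₂).im) = 2 * S18.G (τ₁+z₁) (τ₂+z₂) := by
    rw [S18.G]
    field_simp
  have key2 : ((τ₁ - z₁).im ^ 2 + (τ₂ - z₂).im ^ 2 + ((τ₁ - z₁).re - (τ₂ - z₂).re) ^ 2) /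
      ((τ₁ - z₁).im * (τ₂ - z₂).im) = 2 * S18.G (τ₁-z₁) (τ₂-z₂) := by
    rw [S18.G]
    field_simp
  refine ⟨?_, ?_, ?_⟩
  · rw [key1]; linarith [S18.one_le_G hp1 hq1]
  · rw [key2]; linarith [S18.one_le_G hp2 hq2]
  · rw [key1, key2]
    have s4 : ∀ x : ℝ, Real.sqrt ((2*x)^2 - 4) = 2 * Real.sqrt (x^2-1) := by
      intro x
      rw [show (2*x)^2 - 4 = (2:ℝ)^2*(x^2-1) by ring,
        Real.sqrt_mul (by positivity) _, Real.sqrt_sq (by norm_num)]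
    rw [s4, s4]
    have l1 : ∀ x : ℝ, (2 * x + 2 * Real.sqrt (x^2-1))/2 = x + Real.sqrt (x^2-1) := by
      intro x; ring
    rw [l1, l1]
    show sInf (joinLengths τ₁ z₁ τ₂ z₂) =
      Real.sqrt (S18.dH (τ₁+z₁) (τ₂+z₂)^2 + S18.dH (τ₁-z₁) (τ₂-z₂)^2)
    apply le_antisymm
    · exact csInf_le ⟨_, S18.lower_le τ₁ z₁ τ₂ z₂ h₁ h₂⟩ (S18.upper_mem τ₁ z₁ τ₂ z₂ h₁ h₂)
    · exact le_csInf ⟨_, S18.upper_mem τ₁ z₁ τ₂ z₂ h₁ h₂⟩ (S18.lower_le τ₁ z₁ τ₂ z₂ h₁ h₂)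
end
end
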